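/- Let φ be a self-map of the (q+1)-homogeneous rooted tree T, q ≥ 1. Then C_φ is a bounded operator on T_{∞,0} (equivalently, C_φ maps T_{∞,0} into T_{∞,0}) if and only if |φ(v)| → ∞ as |v| → ∞. -/

import Mathlib

open scoped BigOperators Classical

noncomputable section

/-- `treeC q n` is the number `c_n` of vertices at level `n` of the
`(q+1)`-homogeneous rooted tree: `c_0 = 1` and `c_n = (q+1) q^(n-1)` for `n ≥ 1`. -/
def treeC (q n : ℕ) : ℕ := if n = 0 then 1 else (q + 1) * q ^ (n - 1)

/-- An abstract `(q+1)`-homogeneous rooted tree, described by its vertex set, root,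
level function `|·|` (graph distance to the root), and the level counts:
level `n` contains exactly `c_n = treeC q n` vertices. -/
structure HomTree (q : ℕ) where
  V : Type
  root : V
  level : V → ℕ
  level_eq_zero_iff : ∀ v : V, level v = 0 ↔ v = root
  finiteLevel : ∀ n : ℕ, {v : V | level v = n}.Finite
  card_level : ∀ n : ℕ, (finiteLevel n).toFinset.card = treeC q n

namespace HomTree

variable {q : ℕ} (T : HomTree q)

/-- The set `D_n` of vertices of level `n`, as a finset. -/
def levelFinset (n : ℕ) : Finset T.V := (T.finiteLevel n).toFinset

/-- `M_p(n, f)` for `0 < p < ∞`: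
`M_p(n,f) = ((1/c_n) ∑_{|v|=n} |f v|^p)^(1/p)` (which equals `|f o|` for `n = 0`). -/
def Mp (p : ℝ) (n : ℕ) (f : T.V → ℂ) : ℝ :=
  ((1 / (treeC q n : ℝ)) * ∑ v ∈ T.levelFinset n, ‖f v‖ ^ p) ^ (1 / p)

/-- `M_∞(n, f) = max_{|v| = n} |f v|`. -/
def Minf (n : ℕ) (f : T.V → ℂ) : ℝ :=
  sSup ((fun v => ‖f v‖) '' {v : T.V | T.level v = n})

/-- `f ∈ T_p`, i.e. `‖f‖_p = sup_n M_p(n,f) < ∞`. -/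
def memTp (p : ℝ) (f : T.V → ℂ) : Prop := BddAbove (Set.range fun n => T.Mp p n f)

/-- `‖f‖_p = sup_n M_p(n, f)`. -/
def normTp (p : ℝ) (f : T.V → ℂ) : ℝ := ⨆ n, T.Mp p n f

/-- `f ∈ T_∞`. -/
def memTinf (f : T.V → ℂ) : Prop := BddAbove (Set.range fun n => T.Minf n f)

/-- `‖f‖_∞ = sup_n M_∞(n, f)`. -/
def normTinf (f : T.V → ℂ) : ℝ := ⨆ n, T.Minf n f

/-- `f ∈ T_{p,0}`: `f ∈ T_p` and `M_p(n,f) → 0` as `n → ∞`. -/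
def memTp0 (p : ℝ) (f : T.V → ℂ) : Prop :=
  T.memTp p f ∧ Filter.Tendsto (fun n => T.Mp p n f) Filter.atTop (nhds 0)

/-- `f ∈ T_{∞,0}`. -/
def memTinf0 (f : T.V → ℂ) : Prop :=
  T.memTinf f ∧ Filter.Tendsto (fun n => T.Minf n f) Filter.atTop (nhds 0)

/-- `N_φ(n, w)`: the number of preimages of `w` under `φ` at level `n`. -/
def Nphi (phi : T.V → T.V) (n : ℕ) (w : T.V) : ℕ :=
  ((T.levelFinset n).filter fun v => phi v = w).card

/-- `N_{m,n} = max_{|w| = m} N_φ(n, w)`. -/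
def Nmax (phi : T.V → T.V) (m n : ℕ) : ℕ :=
  (T.levelFinset m).sup fun w => T.Nphi phi n w

/-- `C_φ` is a bounded operator on `T_p`: it maps `T_p` into `T_p` and
`‖f ∘ φ‖_p ≤ C ‖f‖_p` for some constant `C`. -/
def BoundedCompTp (p : ℝ) (phi : T.V → T.V) : Prop :=
  (∀ f : T.V → ℂ, T.memTp p f → T.memTp p (f ∘ phi)) ∧
  ∃ C : ℝ, ∀ f : T.V → ℂ, T.memTp p f → T.normTp p (f ∘ phi) ≤ C * T.normTp p f

/-- The operator norm of `C_φ` on `T_p`: `sup {‖f ∘ φ‖_p : f ∈ T_p, ‖f‖_p = 1}`. -/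
def opNormTp (p : ℝ) (phi : T.V → T.V) : ℝ :=
  sSup {x : ℝ | ∃ f : T.V → ℂ, T.memTp p f ∧ T.normTp p f = 1 ∧ x = T.normTp p (f ∘ phi)}

/-- `C_φ` is a bounded operator on `T_{p,0}`. -/
def BoundedCompTp0 (p : ℝ) (phi : T.V → T.V) : Prop :=
  (∀ f : T.V → ℂ, T.memTp0 p f → T.memTp0 p (f ∘ phi)) ∧
  ∃ C : ℝ, ∀ f : T.V → ℂ, T.memTp0 p f → T.normTp p (f ∘ phi) ≤ C * T.normTp p f

/-- The operator norm of `C_φ` on `T_{p,0}`. -/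
def opNormTp0 (p : ℝ) (phi : T.V → T.V) : ℝ :=
  sSup {x : ℝ | ∃ f : T.V → ℂ, T.memTp0 p f ∧ T.normTp p f = 1 ∧ x = T.normTp p (f ∘ phi)}

/-- `C_φ` is a bounded operator on `T_{∞,0}`. -/
def BoundedCompTinf0 (phi : T.V → T.V) : Prop :=
  (∀ f : T.V → ℂ, T.memTinf0 f → T.memTinf0 (f ∘ phi)) ∧
  ∃ C : ℝ, ∀ f : T.V → ℂ, T.memTinf0 f → T.normTinf (f ∘ phi) ≤ C * T.normTinf f

end HomTree

section Aux

variable {q : ℕ} (T : HomTree q)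

lemma treeC_pos (hq : 1 ≤ q) (n : ℕ) : 0 < treeC q n := by
  unfold treeC; split
  · exact one_pos
  · positivity

lemma levelSet_nonempty (hq : 1 ≤ q) (n : ℕ) : {v : T.V | T.level v = n}.Nonempty := by
  have h := T.card_level n
  have hpos := treeC_pos hq n
  rw [← h] at hpos
  obtain ⟨v, hv⟩ := Finset.card_pos.mp hpos
  exact ⟨v, (T.finiteLevel n).mem_toFinset.mp hv⟩

lemma bddAbove_img (f : T.V → ℂ) (n : ℕ) :
    BddAbove ((fun v => ‖f v‖) '' {v : T.V | T.level v = n}) :=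
  ((T.finiteLevel n).image _).bddAbove

lemma le_Minf (f : T.V → ℂ) {n : ℕ} {v : T.V} (hv : T.level v = n) :
    ‖f v‖ ≤ T.Minf n f :=
  le_csSup (bddAbove_img T f n) ⟨v, hv, rfl⟩

lemma Minf_le (f : T.V → ℂ) {n : ℕ} {a : ℝ} (ha : 0 ≤ a)
    (h : ∀ v : T.V, T.level v = n → ‖f v‖ ≤ a) :
    T.Minf n f ≤ a :=
  Real.sSup_le (by rintro x ⟨v, hv, rfl⟩; exact h v hv) ha

lemma Minf_nonneg (f : T.V → ℂ) (n : ℕ) : 0 ≤ T.Minf n f :=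
  Real.sSup_nonneg (by rintro x ⟨v, _, rfl⟩; exact norm_nonneg _)

lemma normTinf_nonneg (f : T.V → ℂ) (hf : T.memTinf f) : 0 ≤ T.normTinf f :=
  le_trans (Minf_nonneg T f 0) (le_ciSup hf 0)

lemma Minf_comp_le (phi : T.V → T.V) (f : T.V → ℂ) (hf : T.memTinf f) (n : ℕ) :
    T.Minf n (f ∘ phi) ≤ T.normTinf f := by
  refine Minf_le T _ (normTinf_nonneg T f hf) fun v hv => ?_
  exact le_trans (le_Minf T f (rfl : T.level (phi v) = _)) (le_ciSup hf _)

end Aux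

/-- `C_φ` is bounded on `T_{∞,0}` iff `|φ v| → ∞` as `|v| → ∞`. -/
theorem bounded_comp_Tinf0_iff (q : ℕ) (hq : 1 ≤ q) (T : HomTree q) (phi : T.V → T.V) :
    T.BoundedCompTinf0 phi ↔
      (∀ A : ℕ, ∃ N : ℕ, ∀ v : T.V, N ≤ T.level v → A ≤ T.level (phi v)) := by
  constructor
  · intro h
    by_contra hc
    push_neg at hc
    obtain ⟨A, hA⟩ := hc
    set f : T.V → ℂ := fun v => if T.level v < A then 1 else 0 with hf
    have habs : ∀ v, ‖f v‖ = if T.level v < A then 1 else 0 := by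
      intro v; simp only [hf]; split <;> simp
    have hmem : T.memTinf0 f := by
      constructor
      · refine ⟨1, ?_⟩
        rintro x ⟨n, rfl⟩
        refine Minf_le T f zero_le_one fun v _ => ?_
        rw [habs]; split <;> norm_num
      · have hM : ∀ n, A ≤ n → T.Minf n f = 0 := fun n hn =>
          le_antisymm (Minf_le T f le_rfl fun v hv => by
            rw [habs, hv]; simp [Nat.not_lt.mpr hn]) (Minf_nonneg T f n)
        refine Filter.Tendsto.congr' ?_ tendsto_const_nhds
        filter_upwards [Filter.eventually_ge_atTop A] with n hn
        exact (hM n hn).symm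
    have h2 := (h.1 f hmem).2
    have hlt : ∀ᶠ n in Filter.atTop, T.Minf n (f ∘ phi) < 1 := by
      have : Set.Iio (1 : ℝ) ∈ nhds (0 : ℝ) := Iio_mem_nhds one_pos
      exact h2.eventually this
    rw [Filter.eventually_atTop] at hlt
    obtain ⟨N, hN⟩ := hlt
    obtain ⟨v, hvN, hvA⟩ := hA N
    have h1 : (1 : ℝ) ≤ T.Minf (T.level v) (f ∘ phi) := by
      refine le_trans ?_ (le_Minf T (f ∘ phi) (rfl : T.level v = _))
      simp [hf, Function.comp, hvA]
    exact absurd (hN (T.level v) hvN) (not_lt.mpr h1)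
  · intro h
    constructor
    · intro f hf
      obtain ⟨hbdd, htend⟩ := hf
      refine ⟨⟨T.normTinf f, by rintro x ⟨n, rfl⟩; exact Minf_comp_le T phi f hbdd n⟩, ?_⟩
      rw [Metric.tendsto_atTop]
      intro ε hε
      rw [Metric.tendsto_atTop] at htend
      obtain ⟨M, hM⟩ := htend (ε / 2) (by linarith)
      obtain ⟨N, hN⟩ := h M
      refine ⟨N, fun n hn => ?_⟩
      have hle : T.Minf n (f ∘ phi) ≤ ε / 2 := by
        refine Minf_le T _ (by linarith) fun v hv => ?_
        have hlev : M ≤ T.level (phi v) := hN v (hv ▸ hn)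
        have := hM (T.level (phi v)) hlev
        rw [Real.dist_eq, sub_zero, abs_of_nonneg (Minf_nonneg T f _)] at this
        exact le_trans (le_Minf T f (rfl : T.level (phi v) = _)) this.le
      rw [Real.dist_eq, sub_zero, abs_of_nonneg (Minf_nonneg T _ _)]
      linarith
    · refine ⟨1, fun f hf => ?_⟩
      rw [one_mul]
      exact ciSup_le fun n => Minf_comp_le T phi f hf.1 n
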